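/- arXiv:1004.0524 — 6 statements merged into one kernel-verified Lean document; each statement's English description precedes it below -/
import Mathlib

section
/- Let 0 < λ_2 < λ_1 < 1 and η = (η_1, η_2) with η_1, η_2 ≠ 0. Define α = (λ_1²η_1² + λ_2²η_2²)/(λ_1³η_1² + λ_2³η_2²) − 1 and η'_i = (1 − (1+α)λ_i) η_i for i = 1,2. Then η'_1/η'_2 = −(λ_2²/λ_1²)(η_2/η_1). -/
/-- One SOR step in 2-d eigencoordinates flips and rescales the coordinate ratio:
`η'_1/η'_2 = −(λ_2²/λ_1²)(η_2/η_1)`. -/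
theorem stmt_6 (l1 l2 η1 η2 : ℝ)
    (hl : 0 < l2 ∧ l2 < l1 ∧ l1 < 1) (h1 : η1 ≠ 0) (h2 : η2 ≠ 0)
    (α : ℝ)
    (hα : α = (l1^2*η1^2 + l2^2*η2^2) / (l1^3*η1^2 + l2^3*η2^2) - 1)
    (η1' η2' : ℝ)
    (h1' : η1' = (1 - (1+α)*l1) * η1) (h2' : η2' = (1 - (1+α)*l2) * η2) :
    η1' / η2' = -(l2^2/l1^2) * (η2/η1) := by
  obtain ⟨h2p, h21, h11⟩ := hl
  have h1p : 0 < l1 := h2p.trans h21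
  have hD : 0 < l1^3*η1^2 + l2^3*η2^2 := by positivity
  have hDne : l1^3*η1^2 + l2^3*η2^2 ≠ 0 := hD.ne'
  have e1 : η1' = l2^2*η2^2*(l2 - l1)/(l1^3*η1^2 + l2^3*η2^2) * η1 := by
    rw [h1', hα]; field_simp; ring
  have e2 : η2' = l1^2*η1^2*(l1 - l2)/(l1^3*η1^2 + l2^3*η2^2) * η2 := by
    rw [h2', hα]; field_simp; ring
  have h12 : l1 - l2 ≠ 0 := sub_ne_zero.2 h21.ne'
  rw [e1, e2]
  field_simp
  ring
end

section
/- Under the two-dimensional SOR recursion in eigencoordinates (with 0 < λ_2 < λ_1 < 1, initial coordinates η_0 with both components nonzero, α_t = (λ_1²η_{t−1,1}² + λ_2²η_{t−1,2}²)/(λ_1³η_{t−1,1}² + λ_2³η_{t−1,2}²) − 1 and η_{t,i} = (1−(1+α_t)λ_i)η_{t−1,i}), the relaxation factors satisfy α_{t} = α_{t−2} for all t ≥ 3. -/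
/-- In the two-dimensional SOR recursion the relaxation factors satisfy
`α_t = α_{t−2}` for all `t ≥ 3`. -/
theorem stmt_7 (l1 l2 : ℝ) (hl : 0 < l2 ∧ l2 < l1 ∧ l1 < 1)
    (η1 η2 : ℕ → ℝ) (α : ℕ → ℝ)
    (h01 : η1 0 ≠ 0) (h02 : η2 0 ≠ 0)
    (hα : ∀ t : ℕ, α (t+1) =
      (l1^2*(η1 t)^2 + l2^2*(η2 t)^2) / (l1^3*(η1 t)^2 + l2^3*(η2 t)^2) - 1)
    (hr1 : ∀ t : ℕ, η1 (t+1) = (1 - (1 + α (t+1))*l1) * η1 t)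
    (hr2 : ∀ t : ℕ, η2 (t+1) = (1 - (1 + α (t+1))*l2) * η2 t) :
    ∀ t : ℕ, 3 ≤ t → α t = α (t - 2) := by
  obtain ⟨h2, h21, h1⟩ := hl
  have hl1 : 0 < l1 := h2.trans h21
  have hdiff : l2 - l1 ≠ 0 := by linarith
  have hdiff' : l1 - l2 ≠ 0 := by linarith
  have hD : ∀ t : ℕ, η1 t ≠ 0 → η2 t ≠ 0 →
      l1^3*(η1 t)^2 + l2^3*(η2 t)^2 ≠ 0 := by
    intro t hu hv
    have : 0 < l1^3*(η1 t)^2 + l2^3*(η2 t)^2 := by positivity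
    exact ne_of_gt this
  -- explicit formulas for the contraction factors
  have cform1 : ∀ t : ℕ, η1 t ≠ 0 → η2 t ≠ 0 →
      1 - (1 + α (t+1))*l1
        = l2^2*(η2 t)^2*(l2-l1)/(l1^3*(η1 t)^2+l2^3*(η2 t)^2) := by
    intro t hu hv
    rw [hα t]
    field_simp [hD t hu hv]
    ring
  have cform2 : ∀ t : ℕ, η1 t ≠ 0 → η2 t ≠ 0 →
      1 - (1 + α (t+1))*l2
        = l1^2*(η1 t)^2*(l1-l2)/(l1^3*(η1 t)^2+l2^3*(η2 t)^2) := by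
    intro t hu hv
    rw [hα t]
    field_simp [hD t hu hv]
    ring
  -- the coordinates never vanish
  have nz : ∀ t : ℕ, η1 t ≠ 0 ∧ η2 t ≠ 0 := by
    intro t
    induction t with
    | zero => exact ⟨h01, h02⟩
    | succ n ih =>
      obtain ⟨hu, hv⟩ := ih
      constructor
      · rw [hr1 n, cform1 n hu hv]
        exact mul_ne_zero (div_ne_zero (mul_ne_zero (mul_ne_zero
          (pow_ne_zero 2 (ne_of_gt h2)) (pow_ne_zero 2 hv)) hdiff)
          (hD n hu hv)) hu
      · rw [hr2 n, cform2 n hu hv]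
        exact mul_ne_zero (div_ne_zero (mul_ne_zero (mul_ne_zero
          (pow_ne_zero 2 (ne_of_gt hl1)) (pow_ne_zero 2 hu)) hdiff')
          (hD n hu hv)) hv
  -- contraction factors are nonzero
  have cnz1 : ∀ t : ℕ, 1 - (1 + α (t+1))*l1 ≠ 0 := by
    intro t
    obtain ⟨hu, hv⟩ := nz t
    rw [cform1 t hu hv]
    exact div_ne_zero (mul_ne_zero (mul_ne_zero
      (pow_ne_zero 2 (ne_of_gt h2)) (pow_ne_zero 2 hv)) hdiff) (hD t hu hv)
  have cnz2 : ∀ t : ℕ, 1 - (1 + α (t+1))*l2 ≠ 0 := by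
    intro t
    obtain ⟨hu, hv⟩ := nz t
    rw [cform2 t hu hv]
    exact div_ne_zero (mul_ne_zero (mul_ne_zero
      (pow_ne_zero 2 (ne_of_gt hl1)) (pow_ne_zero 2 hu)) hdiff') (hD t hu hv)
  -- the two-step products of contraction factors agree
  have prodEq : ∀ t : ℕ,
      (1 - (1 + α (t+2))*l1) * (1 - (1 + α (t+1))*l1)
        = (1 - (1 + α (t+2))*l2) * (1 - (1 + α (t+1))*l2) := by
    intro t
    obtain ⟨hu, hv⟩ := nz t
    obtain ⟨hu1, hv1⟩ := nz (t+1)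
    rw [cform1 (t+1) hu1 hv1, cform2 (t+1) hu1 hv1,
      hr1 t, hr2 t, cform1 t hu hv, cform2 t hu hv]
    have hDt := hD t hu hv
    field_simp
  -- main periodicity step
  have main : ∀ s : ℕ, α (s+3) = α (s+1) := by
    intro s
    obtain ⟨hu, hv⟩ := nz s
    set P : ℝ := (1 - (1 + α (s+2))*l1) * (1 - (1 + α (s+1))*l1) with hP
    have hPne : P ≠ 0 := mul_ne_zero (cnz1 (s+1)) (cnz1 s)
    have he1 : η1 (s+2) = P * η1 s := by
      rw [hr1 (s+1), hr1 s]; ring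
    have he2 : η2 (s+2) = P * η2 s := by
      rw [hr2 (s+1), hr2 s, hP, prodEq s]; ring
    rw [hα (s+2), hα s, he1, he2]
    have hnum : l1^2*(P * η1 s)^2 + l2^2*(P * η2 s)^2
        = P^2 * (l1^2*(η1 s)^2 + l2^2*(η2 s)^2) := by ring
    have hden : l1^3*(P * η1 s)^2 + l2^3*(P * η2 s)^2
        = P^2 * (l1^3*(η1 s)^2 + l2^3*(η2 s)^2) := by ring
    rw [hnum, hden, mul_div_mul_left _ _ (pow_ne_zero 2 hPne)]
  -- conclude
  intro t ht
  obtain ⟨s, rfl⟩ := Nat.exists_eq_add_of_le ht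
  have h3 : 3 + s = s + 3 := by omega
  rw [h3]
  have h4 : s + 3 - 2 = s + 1 := by omega
  rw [h4]
  exact main s
end

section
/- Let 0 < λ_2 < λ_1 < 1 and η_1, η_2 ≠ 0; let α_{t−1}, α_t be the SOR relaxation factors at two successive steps starting from η = (η_1, η_2). Then for j = 1,2, the product of contraction factors satisfies [1−(1+α_t)λ_j][1−(1+α_{t−1})λ_j] = (λ_1−λ_2)² / [λ_1² + λ_2² + λ_1λ_2((λ_1²/λ_2²)(η_1²/η_2²) + (λ_2²/λ_1²)(η_2²/η_1²))], and this value is the same for j = 1 and j = 2. -/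
/-- Two successive SOR contraction factors multiply to the same value in both
eigendirections, given by the stated closed form. -/
theorem stmt_9 (l1 l2 η1 η2 : ℝ)
    (hl : 0 < l2 ∧ l2 < l1 ∧ l1 < 1) (h1 : η1 ≠ 0) (h2 : η2 ≠ 0)
    (αprev : ℝ)
    (hαprev : αprev = (l1^2*η1^2 + l2^2*η2^2) / (l1^3*η1^2 + l2^3*η2^2) - 1)
    (η1' η2' : ℝ)
    (h1' : η1' = (1 - (1+αprev)*l1) * η1) (h2' : η2' = (1 - (1+αprev)*l2) * η2)
    (αt : ℝ)
    (hαt : αt = (l1^2*η1'^2 + l2^2*η2'^2) / (l1^3*η1'^2 + l2^3*η2'^2) - 1) :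
    ((1 - (1+αt)*l1) * (1 - (1+αprev)*l1) =
      (l1 - l2)^2 / (l1^2 + l2^2 + l1*l2*((l1^2/l2^2)*(η1^2/η2^2) + (l2^2/l1^2)*(η2^2/η1^2)))) ∧
    ((1 - (1+αt)*l2) * (1 - (1+αprev)*l2) =
      (l1 - l2)^2 / (l1^2 + l2^2 + l1*l2*((l1^2/l2^2)*(η1^2/η2^2) + (l2^2/l1^2)*(η2^2/η1^2)))) := by
  obtain ⟨h2pos, h21, h11⟩ := hl
  have h1pos : 0 < l1 := h2pos.trans h21
  have hne : l1 - l2 ≠ 0 := by nlinarith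
  have hD : l1^3*η1^2 + l2^3*η2^2 ≠ 0 := by positivity
  have hE : l1^4*l2^3*η1^2 + l1^3*l2^4*η2^2 ≠ 0 := by positivity
  have hc1 : 1 - (1+αprev)*l1 = l2^2*η2^2*(l2-l1) / (l1^3*η1^2 + l2^3*η2^2) := by
    rw [hαprev]; field_simp; ring
  have hc2 : 1 - (1+αprev)*l2 = l1^2*η1^2*(l1-l2) / (l1^3*η1^2 + l2^3*η2^2) := by
    rw [hαprev]; field_simp; ring
  have hk : η1^2*η2^2*(l1-l2)^2/(l1^3*η1^2 + l2^3*η2^2)^2 ≠ 0 := by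
    apply div_ne_zero
    · positivity
    · positivity
  have hn1 : l1^2*η1'^2 + l2^2*η2'^2 =
      (l1^4*l2^2*η1^2 + l1^2*l2^4*η2^2) * (η1^2*η2^2*(l1-l2)^2/(l1^3*η1^2 + l2^3*η2^2)^2) := by
    rw [h1', h2', hc1, hc2]; field_simp; ring
  have hn2 : l1^3*η1'^2 + l2^3*η2'^2 =
      (l1^4*l2^3*η1^2 + l1^3*l2^4*η2^2) * (η1^2*η2^2*(l1-l2)^2/(l1^3*η1^2 + l2^3*η2^2)^2) := by
    rw [h1', h2', hc1, hc2]; field_simp; ring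
  have hαt' : αt = (l1^4*l2^2*η1^2 + l1^2*l2^4*η2^2) / (l1^4*l2^3*η1^2 + l1^3*l2^4*η2^2) - 1 := by
    rw [hαt, hn1, hn2, mul_div_mul_right _ _ hk]
  have hc1t : 1 - (1+αt)*l1 = l1^4*l2^2*η1^2*(l2-l1) / (l1^4*l2^3*η1^2 + l1^3*l2^4*η2^2) := by
    rw [hαt']; field_simp; ring
  have hc2t : 1 - (1+αt)*l2 = l1^2*l2^4*η2^2*(l1-l2) / (l1^4*l2^3*η1^2 + l1^3*l2^4*η2^2) := by
    rw [hαt']; field_simp; ring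
  rw [hc1t, hc2t, hc1, hc2]
  constructor <;> (field_simp; ring)
end

section
/- Under the two-dimensional SOR recursion (0 < λ_2 < λ_1 < 1, eigencoordinates η_t with both components of η_0 nonzero), the ratio η_{t,1}/η_{t,2} satisfies η_{t,1}/η_{t,2} = η_{t−2,1}/η_{t−2,2} for all t ≥ 2; hence the odd-indexed iterates θ̃_1, θ̃_3, θ̃_5, ... lie on a single line through the MLE θ̂, and the even-indexed iterates lie on another line through θ̂. -/
/-- In the two-dimensional SOR recursion the coordinate ratio is 2-periodic,
so same-parity iterates are collinear with the MLE `θ̂`. -/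
theorem stmt_12 (l1 l2 : ℝ) (hl : 0 < l2 ∧ l2 < l1 ∧ l1 < 1)
    (η1 η2 : ℕ → ℝ) (α : ℕ → ℝ)
    (h01 : η1 0 ≠ 0) (h02 : η2 0 ≠ 0)
    (hα : ∀ t : ℕ, α (t+1) =
      (l1^2*(η1 t)^2 + l2^2*(η2 t)^2) / (l1^3*(η1 t)^2 + l2^3*(η2 t)^2) - 1)
    (hr1 : ∀ t : ℕ, η1 (t+1) = (1 - (1 + α (t+1))*l1) * η1 t)
    (hr2 : ∀ t : ℕ, η2 (t+1) = (1 - (1 + α (t+1))*l2) * η2 t)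
    (P : Matrix (Fin 2) (Fin 2) ℝ) (hP : IsUnit P.det)
    (θhat : Fin 2 → ℝ) (θ : ℕ → Fin 2 → ℝ)
    (hθ : ∀ t : ℕ, θhat - θ t = P.mulVec ![η1 t, η2 t]) :
    ∀ t : ℕ, η1 (t+2) / η2 (t+2) = η1 t / η2 t ∧
      ∃ c : ℝ, θhat - θ (t+2) = c • (θhat - θ t) := by
  obtain ⟨hl2, hl21, hl1⟩ := hl
  have hl1pos : 0 < l1 := lt_trans hl2 hl21
  -- all coordinates stay nonzero
  have hne : ∀ t : ℕ, η1 t ≠ 0 ∧ η2 t ≠ 0 := by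
    intro t
    induction t with
    | zero => exact ⟨h01, h02⟩
    | succ n ih =>
      obtain ⟨h1, h2⟩ := ih
      have hD : (0:ℝ) < l1^3*(η1 n)^2 + l2^3*(η2 n)^2 := by positivity
      have hDne : (l1^3*(η1 n)^2 + l2^3*(η2 n)^2) ≠ 0 := ne_of_gt hD
      have hc1 : (1 - (1 + α (n+1))*l1)
          = l2^2*(η2 n)^2*(l2 - l1) / (l1^3*(η1 n)^2 + l2^3*(η2 n)^2) := by
        rw [hα]
        field_simp
        ring
      have hc2 : (1 - (1 + α (n+1))*l2)
          = l1^2*(η1 n)^2*(l1 - l2) / (l1^3*(η1 n)^2 + l2^3*(η2 n)^2) := by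
        rw [hα]
        field_simp
        ring
      constructor
      · rw [hr1, hc1]
        apply mul_ne_zero _ h1
        apply div_ne_zero _ hDne
        have h' : l2 - l1 ≠ 0 := by linarith
        exact mul_ne_zero (mul_ne_zero (by positivity) (pow_ne_zero 2 h2)) h'
      · rw [hr2, hc2]
        apply mul_ne_zero _ h2
        apply div_ne_zero _ hDne
        have : 0 < l1 - l2 := by linarith
        positivity
  -- key orthogonality-type identity
  have hkey : ∀ t : ℕ, l1^2 * η1 t * η1 (t+1) + l2^2 * η2 t * η2 (t+1) = 0 := by
    intro t
    obtain ⟨h1, h2⟩ := hne t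
    have hD : (0:ℝ) < l1^3*(η1 t)^2 + l2^3*(η2 t)^2 := by positivity
    have hDne : (l1^3*(η1 t)^2 + l2^3*(η2 t)^2) ≠ 0 := ne_of_gt hD
    rw [hr1, hr2, hα]
    field_simp
    ring
  -- cross identity
  have hcross : ∀ t : ℕ, η1 (t+2) * η2 t = η1 t * η2 (t+2) := by
    intro t
    have e1 := hkey t
    have e2 := hkey (t+1)
    have hm : (l1^2 * η1 (t+1)) ≠ 0 :=
      mul_ne_zero (by positivity) (hne (t+1)).1
    apply mul_left_cancel₀ hm
    have : t + 1 + 1 = t + 2 := rfl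
    rw [this] at e2
    linear_combination η2 t * e2 - η2 (t+2) * e1
  intro t
  obtain ⟨h1t, h2t⟩ := hne t
  obtain ⟨h1t2, h2t2⟩ := hne (t+2)
  have hratio : η1 (t+2) / η2 (t+2) = η1 t / η2 t := by
    rw [div_eq_div_iff h2t2 h2t]
    linear_combination hcross t
  refine ⟨hratio, η2 (t+2) / η2 t, ?_⟩
  have hv : (![η1 (t+2), η2 (t+2)] : Fin 2 → ℝ)
      = (η2 (t+2) / η2 t) • ![η1 t, η2 t] := by
    funext i
    fin_cases i
    · simp only [Fin.zero_eta, Matrix.cons_val_zero, Pi.smul_apply, smul_eq_mul]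
      field_simp
      linear_combination hcross t
    · simp only [Fin.mk_one, Matrix.cons_val_one, Matrix.cons_val_zero, Matrix.head_cons, Pi.smul_apply, smul_eq_mul]
      field_simp
  rw [hθ, hθ, hv, Matrix.mulVec_smul]
end

section
/- Under the two-dimensional SOR recursion with 0 < λ_2 < λ_1 < 1 and η_{0,1}, η_{0,2} ≠ 0, the signs alternate in the first coordinate and are preserved in the second: η_{t,1}·η_{t−1,1} < 0 and η_{t,2}·η_{t−1,2} > 0 for all t ≥ 1. -/
/-- SOR zigzags: the first eigencoordinate alternates sign at every step,
while the second keeps its sign. -/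
theorem stmt_13 (l1 l2 : ℝ) (hl : 0 < l2 ∧ l2 < l1 ∧ l1 < 1)
    (η1 η2 : ℕ → ℝ) (α : ℕ → ℝ)
    (h01 : η1 0 ≠ 0) (h02 : η2 0 ≠ 0)
    (hα : ∀ t : ℕ, α (t+1) =
      (l1^2*(η1 t)^2 + l2^2*(η2 t)^2) / (l1^3*(η1 t)^2 + l2^3*(η2 t)^2) - 1)
    (hr1 : ∀ t : ℕ, η1 (t+1) = (1 - (1 + α (t+1))*l1) * η1 t)
    (hr2 : ∀ t : ℕ, η2 (t+1) = (1 - (1 + α (t+1))*l2) * η2 t) :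
    ∀ t : ℕ, η1 (t+1) * η1 t < 0 ∧ 0 < η2 (t+1) * η2 t := by
  obtain ⟨hl2, hl21, hl11⟩ := hl
  have hl1 : 0 < l1 := lt_trans hl2 hl21
  have fact : ∀ t : ℕ, η1 t ≠ 0 → η2 t ≠ 0 →
      (1 - (1 + α (t+1))*l1) < 0 ∧ 0 < (1 - (1 + α (t+1))*l2) := by
    intro t ha hb
    have ha2 : 0 < (η1 t)^2 := by positivity
    have hb2 : 0 < (η2 t)^2 := by positivity
    have hS3 : 0 < l1^3*(η1 t)^2 + l2^3*(η2 t)^2 := by positivity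
    constructor
    · rw [hα t]
      have heq : 1 - (1 + ((l1^2*(η1 t)^2 + l2^2*(η2 t)^2) /
          (l1^3*(η1 t)^2 + l2^3*(η2 t)^2) - 1))*l1
          = (l2^2*(η2 t)^2*(l2 - l1)) / (l1^3*(η1 t)^2 + l2^3*(η2 t)^2) := by
        field_simp; ring
      rw [heq]
      apply div_neg_of_neg_of_pos _ hS3
      have h : l2 - l1 < 0 := by linarith
      exact mul_neg_of_pos_of_neg (by positivity) h
    · rw [hα t]
      have heq : 1 - (1 + ((l1^2*(η1 t)^2 + l2^2*(η2 t)^2) /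
          (l1^3*(η1 t)^2 + l2^3*(η2 t)^2) - 1))*l2
          = (l1^2*(η1 t)^2*(l1 - l2)) / (l1^3*(η1 t)^2 + l2^3*(η2 t)^2) := by
        field_simp; ring
      rw [heq]
      apply div_pos _ hS3
      have h : 0 < l1 - l2 := by linarith
      exact mul_pos (by positivity) h
  have key : ∀ t : ℕ, η1 t ≠ 0 ∧ η2 t ≠ 0 := by
    intro t
    induction t with
    | zero => exact ⟨h01, h02⟩
    | succ n ih =>
      obtain ⟨ha, hb⟩ := ih
      obtain ⟨hf1, hf2⟩ := fact n ha hb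
      refine ⟨?_, ?_⟩
      · rw [hr1 n]; exact mul_ne_zero (ne_of_lt hf1) ha
      · rw [hr2 n]; exact mul_ne_zero (ne_of_gt hf2) hb
  intro t
  obtain ⟨ha, hb⟩ := key t
  obtain ⟨hf1, hf2⟩ := fact t ha hb
  have ha2 : 0 < (η1 t)^2 := by positivity
  have hb2 : 0 < (η2 t)^2 := by positivity
  constructor
  · rw [hr1 t, mul_assoc, ← sq]
    exact mul_neg_of_neg_of_pos hf1 ha2
  · rw [hr2 t, mul_assoc, ← sq]
    exact mul_pos hf2 hb2
end

section
/- Let 0 < λ_2 < λ_1 < 1 and let M(α) = diag(1−(1+α)λ_1, 1−(1+α)λ_2). If α_{t−1}, α_t are two successive SOR relaxation factors generated from a state η with both components nonzero, then M(α_t)·M(α_{t−1}) = c·I_2 where c = [1−(1+α_t)λ_1][1−(1+α_{t−1})λ_1], i.e., the composition of two successive SOR steps is a scalar multiple of the identity in eigencoordinates. -/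
/-- The composition of two successive SOR steps is a scalar multiple of the
identity in eigencoordinates. -/
theorem stmt_17 (l1 l2 η1 η2 : ℝ)
    (hl : 0 < l2 ∧ l2 < l1 ∧ l1 < 1) (h1 : η1 ≠ 0) (h2 : η2 ≠ 0)
    (M : ℝ → Matrix (Fin 2) (Fin 2) ℝ)
    (hM : ∀ a : ℝ, M a = Matrix.diagonal ![1 - (1+a)*l1, 1 - (1+a)*l2])
    (αprev : ℝ)
    (hαprev : αprev = (l1^2*η1^2 + l2^2*η2^2) / (l1^3*η1^2 + l2^3*η2^2) - 1)
    (η1' η2' : ℝ)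
    (h1' : η1' = (1 - (1+αprev)*l1) * η1) (h2' : η2' = (1 - (1+αprev)*l2) * η2)
    (αt : ℝ)
    (hαt : αt = (l1^2*η1'^2 + l2^2*η2'^2) / (l1^3*η1'^2 + l2^3*η2'^2) - 1) :
    M αt * M αprev =
      ((1 - (1+αt)*l1) * (1 - (1+αprev)*l1)) • (1 : Matrix (Fin 2) (Fin 2) ℝ) := by
  obtain ⟨hl2, hl21, hl1⟩ := hl
  have hl1pos : 0 < l1 := hl2.trans hl21
  have hD : (0:ℝ) < l1^3*η1^2 + l2^3*η2^2 := by positivity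
  have hDne := hD.ne'
  -- closed forms for the αprev factors
  have ha : 1 - (1+αprev)*l1 = l2^2*η2^2*(l2-l1) / (l1^3*η1^2 + l2^3*η2^2) := by
    rw [hαprev]; field_simp; ring
  have hb : 1 - (1+αprev)*l2 = l1^2*η1^2*(l1-l2) / (l1^3*η1^2 + l2^3*η2^2) := by
    rw [hαprev]; field_simp; ring
  have haneg : 1 - (1+αprev)*l1 < 0 := by
    rw [ha]
    apply div_neg_of_neg_of_pos _ hD
    have : l2 - l1 < 0 := by linarith
    have h2' : 0 < l2^2*η2^2 := by positivity
    nlinarith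
  have hbpos : 0 < 1 - (1+αprev)*l2 := by
    rw [hb]
    apply div_pos _ hD
    have : 0 < l1 - l2 := by linarith
    positivity
  have h1'ne : η1' ≠ 0 := by
    rw [h1']; exact mul_ne_zero haneg.ne h1
  have h2'ne : η2' ≠ 0 := by
    rw [h2']; exact mul_ne_zero hbpos.ne' h2
  have hD' : (0:ℝ) < l1^3*η1'^2 + l2^3*η2'^2 := by positivity
  have hD'ne := hD'.ne'
  have key : (1 - (1+αt)*l2) * (1 - (1+αprev)*l2)
      = (1 - (1+αt)*l1) * (1 - (1+αprev)*l1) := by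
    have ha' : 1 - (1+αt)*l1 = l2^2*η2'^2*(l2-l1) / (l1^3*η1'^2 + l2^3*η2'^2) := by
      rw [hαt]; field_simp; ring
    have hb' : 1 - (1+αt)*l2 = l1^2*η1'^2*(l1-l2) / (l1^3*η1'^2 + l2^3*η2'^2) := by
      rw [hαt]; field_simp; ring
    have hnum : (l1^2*η1'^2*(l1-l2)) * (l1^2*η1^2*(l1-l2))
        = (l2^2*η2'^2*(l2-l1)) * (l2^2*η2^2*(l2-l1)) := by
      rw [h1', h2', ha, hb]
      field_simp
    rw [ha', hb', ha, hb, div_mul_div_comm, div_mul_div_comm, hnum]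
  rw [hM, hM, Matrix.diagonal_mul_diagonal, ← Matrix.diagonal_one,
    ← Matrix.diagonal_smul]
  ext i j
  fin_cases i <;> fin_cases j <;>
    simp [Matrix.diagonal, Matrix.smul_apply, key]
end
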